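/- Let f, g : ℝⁿ → ℝ with f differentiable, and suppose for all x satisfying P the Lie derivative of f along e at x is ≥ g(x)·f(x), with t ↦ g(γ(t)) continuous on [0,T]. Then for any differentiable solution γ : [0,T] → ℝⁿ of ẋ = e staying in P with f(γ(0)) ≥ 0, we have f(γ(t)) ≥ 0 for all t ∈ [0,T]. -/

import Mathlib

open InnerProductSpace

/-- Soundness of the Darboux inequality rule (dbx≽). -/
theorem dbx_ge {n : ℕ} (e : EuclideanSpace ℝ (Fin n) → EuclideanSpace ℝ (Fin n))
    (f g : EuclideanSpace ℝ (Fin n) → ℝ) (P : EuclideanSpace ℝ (Fin n) → Prop)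
    (γ : ℝ → EuclideanSpace ℝ (Fin n)) (T : ℝ) (hT : 0 ≤ T)
    (hf : Differentiable ℝ f)
    (hlie : ∀ x, P x → ⟪gradient f x, e x⟫_ℝ ≥ g x * f x)
    (hg : ContinuousOn (fun t => g (γ t)) (Set.Icc (0:ℝ) T))
    (hγ : ∀ t ∈ Set.Icc (0:ℝ) T, HasDerivAt γ (e (γ t)) t)
    (hP : ∀ t ∈ Set.Icc (0:ℝ) T, P (γ t))
    (h0 : f (γ 0) ≥ 0) :
    ∀ t ∈ Set.Icc (0:ℝ) T, f (γ t) ≥ 0 := by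
  set h : ℝ → ℝ := fun t => f (γ t) with hh
  set G : ℝ → ℝ := fun t => ∫ s in (0:ℝ)..t, g (γ s) with hG
  have huIcc : Set.uIcc (0:ℝ) T = Set.Icc (0:ℝ) T := Set.uIcc_of_le hT
  have hgint : IntervalIntegrable (fun s => g (γ s)) MeasureTheory.volume 0 T := by
    apply ContinuousOn.intervalIntegrable
    rwa [huIcc]
  -- h has derivative ⟪∇f(γ t), e(γ t)⟫ at each t ∈ Icc 0 T
  have hd : ∀ t ∈ Set.Icc (0:ℝ) T, HasDerivAt h (⟪gradient f (γ t), e (γ t)⟫_ℝ) t := by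
    intro t ht
    have hgrad := (hf (γ t)).hasGradientAt
    have := hgrad.hasFDerivAt.comp_hasDerivAt t (hγ t ht)
    simp only [toDual_apply_apply] at this
    exact this
  -- G has derivative g(γ t) at interior points
  have hGd : ∀ t ∈ Set.Ioo (0:ℝ) T, HasDerivAt G (g (γ t)) t := by
    intro t ht
    have htmem : Set.Icc (0:ℝ) T ∈ nhds t := Icc_mem_nhds ht.1 ht.2
    have hcont : ContinuousAt (fun s => g (γ s)) t := hg.continuousAt htmem
    have hint : IntervalIntegrable (fun s => g (γ s)) MeasureTheory.volume 0 t :=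
      hgint.mono_set (by rw [huIcc, Set.uIcc_of_le ht.1.le]; exact Set.Icc_subset_Icc_right ht.2.le)
    exact intervalIntegral.integral_hasDerivAt_right hint
      ⟨Set.Icc (0:ℝ) T, htmem, hg.aestronglyMeasurable measurableSet_Icc⟩ hcont
  -- G is continuous on Icc 0 T
  have hGc : ContinuousOn G (Set.Icc (0:ℝ) T) := by
    rw [← huIcc]
    exact intervalIntegral.continuousOn_primitive_interval' hgint (by rw [huIcc]; exact ⟨le_refl 0, hT⟩)
  set w : ℝ → ℝ := fun t => h t * Real.exp (-G t) with hw
  have hwd : ∀ t ∈ Set.Ioo (0:ℝ) T, HasDerivAt w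
      ((⟪gradient f (γ t), e (γ t)⟫_ℝ - g (γ t) * h t) * Real.exp (-G t)) t := by
    intro t ht
    have h1 := hd t (Set.Ioo_subset_Icc_self ht)
    have h2 : HasDerivAt (fun s => Real.exp (-G s)) (-g (γ t) * Real.exp (-G t)) t := by
      have := ((hGd t ht).neg).exp
      simpa [mul_comm] using this
    have := h1.mul h2
    exact this.congr_deriv (by ring)
  have hwmono : MonotoneOn w (Set.Icc (0:ℝ) T) := by
    apply monotoneOn_of_deriv_nonneg (convex_Icc 0 T)
    · exact ((hf.continuous.comp_continuousOn (fun t ht => (hγ t ht).continuousAt.continuousWithinAt))).mul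
        ((hGc.neg).rexp)
    · intro t ht
      rw [interior_Icc] at ht
      exact (hwd t ht).differentiableAt.differentiableWithinAt
    · intro t ht
      rw [interior_Icc] at ht
      rw [(hwd t ht).deriv]
      have hP' := hP t (Set.Ioo_subset_Icc_self ht)
      have := hlie (γ t) hP'
      have hexp : (0:ℝ) ≤ Real.exp (-G t) := (Real.exp_pos _).le
      apply mul_nonneg _ hexp
      simp only [hh]
      linarith
  intro t ht
  have hw0 : w 0 = h 0 := by simp [hw, hG]
  have := hwmono ⟨le_refl 0, hT⟩ ht ht.1
  rw [hw0] at this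
  have hwt : 0 ≤ w t := le_trans h0 this
  have hexp : 0 < Real.exp (-G t) := Real.exp_pos _
  have hwt' : 0 ≤ h t * Real.exp (-G t) := hwt
  nlinarith [hwt', hexp]
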